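/- Let X be a connected graph that is not a cycle and not a single vertex, and let C_X be obtained from X by subdividing each edge into a path of length four (i.e., replacing each edge x_i x_j = e_k by the path x_i, q_{ik}, r_k, q_{jk}, x_j). Then Aut(C_X) is isomorphic to Aut(X). -/

import Mathlib

/-- The vertex set of the graph obtained from `X` by replacing each edge by a path
of length four: original vertices, incidence vertices `q` and edge vertices `r`. -/
def SubdivVert {V : Type*} (X : SimpleGraph V) : Type _ :=
  V ⊕ {p : V × X.edgeSet // p.1 ∈ (p.2 : Sym2 V)} ⊕ X.edgeSet

/-- The graph `C_X` obtained from `X` by replacing every edge `x_i x_j = e_k` by the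
path `x_i, q_{ik}, r_k, q_{jk}, x_j` of length four. -/
def subdivide4 {V : Type*} (X : SimpleGraph V) : SimpleGraph (SubdivVert X) :=
  SimpleGraph.fromRel (fun a b =>
    match a, b with
    | Sum.inl v, Sum.inr (Sum.inl q) => v = q.1.1
    | Sum.inr (Sum.inl q), Sum.inr (Sum.inr e) => q.1.2 = e
    | _, _ => False)

namespace Subdiv4
open SimpleGraph Sum

variable {V : Type*} {X : SimpleGraph V}

abbrev QT (X : SimpleGraph V) := {p : V × X.edgeSet // p.1 ∈ (p.2 : Sym2 V)}

@[simp] lemma inl_inj {a b : V} : (inl a : SubdivVert X) = inl b ↔ a = b :=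
  ⟨fun h => Sum.inl_injective h, fun h => h ▸ rfl⟩

@[simp] lemma q_inj {q q' : QT X} : (inr (inl q) : SubdivVert X) = inr (inl q') ↔ q = q' :=
  ⟨fun h => Sum.inl_injective (Sum.inr_injective h), fun h => h ▸ rfl⟩

@[simp] lemma r_inj {e e' : X.edgeSet} : (inr (inr e) : SubdivVert X) = inr (inr e') ↔ e = e' :=
  ⟨fun h => Sum.inr_injective (Sum.inr_injective h), fun h => h ▸ rfl⟩

@[simp] lemma inl_ne_q {a : V} {q : QT X} : ¬((inl a : SubdivVert X) = inr (inl q)) :=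
  fun h => nomatch h

@[simp] lemma q_ne_inl {a : V} {q : QT X} : ¬((inr (inl q) : SubdivVert X) = inl a) :=
  fun h => nomatch h

@[simp] lemma inl_ne_r {a : V} {e : X.edgeSet} : ¬((inl a : SubdivVert X) = inr (inr e)) :=
  fun h => nomatch h

@[simp] lemma r_ne_inl {a : V} {e : X.edgeSet} : ¬((inr (inr e) : SubdivVert X) = inl a) :=
  fun h => nomatch h

@[simp] lemma q_ne_r {q : QT X} {e : X.edgeSet} : ¬((inr (inl q) : SubdivVert X) = inr (inr e)) :=
  fun h => nomatch (Sum.inr_injective h)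

@[simp] lemma r_ne_q {q : QT X} {e : X.edgeSet} : ¬((inr (inr e) : SubdivVert X) = inr (inl q)) :=
  fun h => nomatch (Sum.inr_injective h)

lemma adj_inl {v : V} {w : SubdivVert X} :
    (subdivide4 X).Adj (inl v) w ↔ ∃ q : QT X, q.1.1 = v ∧ w = inr (inl q) := by
  unfold subdivide4
  erw [SimpleGraph.fromRel_adj]
  rcases w with u | q | e
  · constructor
    · rintro ⟨-, h | h⟩ <;> exact h.elim
    · rintro ⟨q', h, hw⟩; exact absurd hw (fun h => nomatch h)
  · constructor
    · rintro ⟨-, h | h⟩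
      · exact ⟨q, h.symm, rfl⟩
      · exact h.elim
    · rintro ⟨q', h, hw⟩
      obtain rfl : q = q' := Sum.inl_injective (Sum.inr_injective hw)
      exact ⟨fun h => (nomatch h), Or.inl h.symm⟩
  · constructor
    · rintro ⟨-, h | h⟩ <;> exact h.elim
    · rintro ⟨q', h, hw⟩; exact absurd hw (fun h => nomatch (Sum.inr_injective h))

lemma adj_q {q : QT X} {w : SubdivVert X} :
    (subdivide4 X).Adj (inr (inl q)) w ↔ w = inl q.1.1 ∨ w = inr (inr q.1.2) := by
  unfold subdivide4
  erw [SimpleGraph.fromRel_adj]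
  rcases w with u | q' | e
  · constructor
    · rintro ⟨-, h | h⟩
      · exact h.elim
      · exact Or.inl (by rw [h])
    · rintro (h | h)
      · obtain rfl : u = q.1.1 := Sum.inl_injective h
        exact ⟨fun h => (nomatch h), Or.inr rfl⟩
      · exact absurd h (fun h => nomatch h)
  · constructor
    · rintro ⟨h, h' | h'⟩ <;> exact h'.elim
    · rintro (h | h)
      · exact absurd h (fun h => nomatch h)
      · exact absurd h (fun h => nomatch (Sum.inr_injective h))
  · constructor
    · rintro ⟨-, h | h⟩
      · exact Or.inr (by rw [h])
      · exact h.elim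
    · rintro (h | h)
      · exact absurd h (fun h => nomatch h)
      · obtain rfl : e = q.1.2 := Sum.inr_injective (Sum.inr_injective h)
        exact ⟨fun h => (nomatch (Sum.inr_injective h)), Or.inl rfl⟩

lemma adj_r {e : X.edgeSet} {w : SubdivVert X} :
    (subdivide4 X).Adj (inr (inr e)) w ↔ ∃ q : QT X, q.1.2 = e ∧ w = inr (inl q) := by
  unfold subdivide4
  erw [SimpleGraph.fromRel_adj]
  rcases w with u | q | e'
  · constructor
    · rintro ⟨-, h | h⟩ <;> exact h.elim
    · rintro ⟨q', h, hw⟩; exact absurd hw (fun h => nomatch h)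
  · constructor
    · rintro ⟨-, h | h⟩
      · exact h.elim
      · exact ⟨q, h, rfl⟩
    · rintro ⟨q', h, hw⟩
      obtain rfl : q = q' := Sum.inl_injective (Sum.inr_injective hw)
      exact ⟨fun h => (nomatch (Sum.inr_injective h)), Or.inr h⟩
  · constructor
    · rintro ⟨-, h | h⟩ <;> exact h.elim
    · rintro ⟨q', h, hw⟩; exact absurd hw (fun h => nomatch (Sum.inr_injective h))

lemma edge_not_diag (e : X.edgeSet) : ¬ (e : Sym2 V).IsDiag :=
  X.not_isDiag_of_mem_edgeSet e.2

noncomputable def otherQ (q : QT X) : QT X :=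
  ⟨(Sym2.Mem.other q.2, q.1.2), Sym2.other_mem q.2⟩

lemma otherQ_edge (q : QT X) : (otherQ q).1.2 = q.1.2 := rfl

lemma otherQ_fst_ne (q : QT X) : (otherQ q).1.1 ≠ q.1.1 :=
  Sym2.other_ne (edge_not_diag q.1.2) q.2

lemma otherQ_ne (q : QT X) : otherQ q ≠ q := fun h => otherQ_fst_ne q (by rw [h])

lemma sym2_otherQ (q : QT X) : s(q.1.1, (otherQ q).1.1) = (q.1.2 : Sym2 V) :=
  Sym2.other_spec q.2

lemma qt_ext {q q' : QT X} (h1 : q.1.1 = q'.1.1) (h2 : q.1.2 = q'.1.2) : q = q' :=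
  Subtype.ext (Prod.ext h1 h2)

lemma eq_or_eq_otherQ {q q' : QT X} (h : q'.1.2 = q.1.2) : q' = q ∨ q' = otherQ q := by
  have hm : q'.1.1 ∈ (q.1.2 : Sym2 V) := by rw [← h]; exact q'.2
  rw [← sym2_otherQ q, Sym2.mem_iff] at hm
  rcases hm with hm | hm
  · exact Or.inl (qt_ext hm h)
  · exact Or.inr (qt_ext hm (h.trans (otherQ_edge q).symm))

noncomputable def qOf (e : X.edgeSet) : QT X :=
  ⟨((e : Sym2 V).out.1, e), Sym2.out_fst_mem _⟩

lemma qOf_edge (e : X.edgeSet) : (qOf e).1.2 = e := rfl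

lemma nbhd_q (q : QT X) :
    (subdivide4 X).neighborSet (inr (inl q)) = {inl q.1.1, inr (inr q.1.2)} := by
  ext w
  erw [SimpleGraph.mem_neighborSet, adj_q]
  exact Iff.rfl

lemma nbhd_r (e : X.edgeSet) :
    (subdivide4 X).neighborSet (inr (inr e)) =
      {inr (inl (qOf e)), inr (inl (otherQ (qOf e)))} := by
  ext w
  erw [SimpleGraph.mem_neighborSet, adj_r]
  constructor
  · rintro ⟨q', h, rfl⟩
    rcases eq_or_eq_otherQ (q := qOf e) (by rw [h, qOf_edge]) with rfl | rfl
    · exact Set.mem_insert _ _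
    · exact Set.mem_insert_of_mem _ rfl
  · rintro (rfl | rfl)
    · exact ⟨qOf e, rfl, rfl⟩
    · exact ⟨otherQ (qOf e), rfl, rfl⟩

lemma ncard_nbhd_q (q : QT X) : ((subdivide4 X).neighborSet (inr (inl q))).ncard = 2 := by
  rw [nbhd_q]
  exact Set.ncard_pair (fun h => nomatch h)

lemma ncard_nbhd_r (e : X.edgeSet) :
    ((subdivide4 X).neighborSet (inr (inr e))).ncard = 2 := by
  rw [nbhd_r]
  refine Set.ncard_pair (fun h => ?_)
  exact otherQ_ne (qOf e) (Sum.inl_injective (Sum.inr_injective h)).symm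

noncomputable def nbInlEquiv (v : V) :
    X.neighborSet v ≃ (subdivide4 X).neighborSet (inl v : SubdivVert X) := by
  refine Equiv.ofBijective
    (fun w => ⟨inr (inl ⟨(v, ⟨s(v, w.1), w.2⟩), Sym2.mem_mk_left _ _⟩),
      by erw [SimpleGraph.mem_neighborSet, adj_inl]; exact ⟨_, rfl, rfl⟩⟩) ⟨?_, ?_⟩
  · intro w w' hww
    have h := Sum.inl_injective (Sum.inr_injective (Subtype.ext_iff.mp hww))
    have h2 : (s(v, w.1) : Sym2 V) = s(v, w'.1) :=
      Subtype.ext_iff.mp (congrArg (fun q : QT X => q.1.2) h)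
    exact Subtype.ext (Sym2.congr_right.mp h2)
  · rintro ⟨u, hu⟩
    erw [SimpleGraph.mem_neighborSet, adj_inl] at hu
    obtain ⟨q, hq1, rfl⟩ := hu
    have hmem : q.1.1 ∈ (q.1.2 : Sym2 V) := q.2
    have hadj : X.Adj v (Sym2.Mem.other q.2) := by
      rw [← hq1, ← SimpleGraph.mem_edgeSet, Sym2.other_spec q.2]
      exact q.1.2.2
    refine ⟨⟨Sym2.Mem.other q.2, hadj⟩, ?_⟩
    apply Subtype.ext
    show (inr (inl _) : SubdivVert X) = _
    congr 1
    apply congrArg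
    refine (qt_ext ?_ ?_).symm
    · exact hq1
    · apply Subtype.ext
      show (q.1.2 : Sym2 V) = s(v, Sym2.Mem.other q.2)
      rw [← hq1]
      exact (Sym2.other_spec q.2).symm

lemma ncard_nbhd_inl (v : V) :
    ((subdivide4 X).neighborSet (inl v : SubdivVert X)).ncard = (X.neighborSet v).ncard := by
  rw [← Nat.card_coe_set_eq, ← Nat.card_coe_set_eq]
  exact Nat.card_congr (nbInlEquiv v).symm

lemma ncard_nbhd_map {W : Type*} {G : SimpleGraph W} (ψ : G ≃g G) (v : W) :
    (G.neighborSet (ψ v)).ncard = (G.neighborSet v).ncard := by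
  rw [← Nat.card_coe_set_eq, ← Nat.card_coe_set_eq]
  exact Nat.card_congr (ψ.mapNeighborSet v).symm

lemma reachable_inl_of_adj {a b : V} (h : X.Adj a b) :
    (subdivide4 X).Reachable (inl a) (inl b) := by
  have h1 : (subdivide4 X).Adj (inl a)
      (inr (inl ⟨(a, ⟨s(a, b), h⟩), Sym2.mem_mk_left _ _⟩)) :=
    adj_inl.mpr ⟨_, rfl, rfl⟩
  have h2 : (subdivide4 X).Adj (inr (inl (⟨(a, ⟨s(a, b), h⟩), Sym2.mem_mk_left _ _⟩ : QT X)))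
      (inr (inr ⟨s(a, b), h⟩)) :=
    adj_q.mpr (Or.inr rfl)
  have h3 : (subdivide4 X).Adj (inr (inr (⟨s(a, b), h⟩ : X.edgeSet)))
      (inr (inl ⟨(b, ⟨s(a, b), h⟩), Sym2.mem_mk_right _ _⟩)) :=
    adj_r.mpr ⟨_, rfl, rfl⟩
  have h4 : (subdivide4 X).Adj (inr (inl (⟨(b, ⟨s(a, b), h⟩), Sym2.mem_mk_right _ _⟩ : QT X)))
      (inl b) :=
    adj_q.mpr (Or.inl rfl)
  exact h1.reachable.trans (h2.reachable.trans (h3.reachable.trans h4.reachable))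

lemma reachable_inl_inl (h : X.Preconnected) (a b : V) :
    (subdivide4 X).Reachable (inl a) (inl b) := by
  obtain ⟨w⟩ := h a b
  induction w with
  | nil => exact SimpleGraph.Reachable.refl _
  | cons hadj _ ih => exact (reachable_inl_of_adj hadj).trans ih

lemma reachable_inl (h : X.Preconnected) (w : SubdivVert X) :
    ∃ v : V, (subdivide4 X).Reachable (inl v) w := by
  rcases w with v | q | e
  · exact ⟨v, SimpleGraph.Reachable.refl _⟩
  · exact ⟨q.1.1, SimpleGraph.Adj.reachable (adj_inl.mpr ⟨q, rfl, rfl⟩)⟩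
  · refine ⟨(qOf e).1.1, ?_⟩
    refine (SimpleGraph.Adj.reachable (adj_inl.mpr ⟨qOf e, rfl, rfl⟩)).trans
      (SimpleGraph.Adj.reachable ?_)
    exact (adj_q (w := inr (inr e))).mpr (Or.inr rfl)

lemma subdivide4_connected (h : X.Connected) : (subdivide4 X).Connected := by
  have hne : Nonempty V := h.nonempty
  have hne2 : Nonempty (SubdivVert X) := ⟨inl (Classical.arbitrary V)⟩
  refine SimpleGraph.Connected.mk (fun u w => ?_)
  obtain ⟨a, ha⟩ := reachable_inl h.preconnected u
  obtain ⟨b, hb⟩ := reachable_inl h.preconnected w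
  exact ha.symm.trans ((reachable_inl_inl h.preconnected a b).trans hb)

open SimpleGraph.Walk in
lemma path_class (n : ℕ) : ∀ (i : V) (v : SubdivVert X) (W : (subdivide4 X).Walk (inl i) v),
    W.IsPath → W.length = n →
    ((∃ j, v = inl j) → n % 4 = 0) ∧ ((∃ q : QT X, v = inr (inl q)) → n % 2 = 1) ∧
    ((∃ e : X.edgeSet, v = inr (inr e)) → n % 4 = 2) := by
  induction n using Nat.strong_induction_on with
  | _ n IH =>
  intro i v W hp hn
  cases W with
  | nil =>
    erw [length_nil] at hn
    subst hn
    refine ⟨fun _ => rfl, ?_, ?_⟩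
    · rintro ⟨q, hq⟩; exact absurd hq (fun h => nomatch h)
    · rintro ⟨e, he⟩; exact absurd he (fun h => nomatch h)
  | cons h W' =>
    obtain ⟨q, hq, rfl⟩ := adj_inl.mp h
    erw [cons_isPath_iff] at hp
    cases W' with
    | nil =>
      erw [length_cons, length_nil] at hn
      subst hn
      refine ⟨?_, fun _ => rfl, ?_⟩
      · rintro ⟨j, hj⟩; exact absurd hj (fun h => nomatch h)
      · rintro ⟨e, he⟩; exact absurd he (fun h => nomatch (Sum.inr_injective h))
    | cons h2 W'' =>
      rcases adj_q.mp h2 with hc | hc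
      · exfalso
        apply hp.2
        erw [support_cons]
        refine List.mem_cons_of_mem _ ?_
        have : inl (α := V) (β := {p : V × X.edgeSet // p.1 ∈ (p.2 : Sym2 V)} ⊕ X.edgeSet) q.1.1
            ∈ W''.support := hc ▸ W''.start_mem_support
        rwa [hq] at this
      · subst hc
        erw [cons_isPath_iff] at hp
        obtain ⟨⟨hp1, hp2⟩, -⟩ := hp
        cases W'' with
        | nil =>
          erw [length_cons, length_cons, length_nil] at hn
          subst hn
          refine ⟨?_, ?_, fun _ => rfl⟩
          · rintro ⟨j, hj⟩; exact absurd hj (fun h => nomatch h)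
          · rintro ⟨q', hq'⟩
            exact absurd hq' (fun h => nomatch (Sum.inr_injective h))
        | cons h3 W''' =>
          obtain ⟨q', hq', rfl⟩ := adj_r.mp h3
          erw [cons_isPath_iff] at hp1
          obtain ⟨hp3, hp4⟩ := hp1
          cases W''' with
          | nil =>
            erw [length_cons, length_cons, length_cons, length_nil] at hn
            subst hn
            refine ⟨?_, fun _ => rfl, ?_⟩
            · rintro ⟨j, hj⟩; exact absurd hj (fun h => nomatch h)
            · rintro ⟨e, he⟩
              exact absurd he (fun h => nomatch (Sum.inr_injective h))
          | cons h4 W'''' =>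
            rcases adj_q.mp h4 with hw | hw
            · subst hw
              erw [cons_isPath_iff] at hp3
              obtain ⟨hp5, -⟩ := hp3
              change W''''.length + 1 + 1 + 1 + 1 = n at hn
              have hlt : W''''.length < n := by omega
              have IH' := IH W''''.length hlt q'.1.1 v W'''' hp5 rfl
              refine ⟨fun hx => ?_, fun hx => ?_, fun hx => ?_⟩
              · have := IH'.1 hx; omega
              · have := IH'.2.1 hx; omega
              · have := IH'.2.2 hx; omega
            · exfalso
              apply hp4
              erw [support_cons]
              refine List.mem_cons_of_mem _ ?_
              rw [hq'] at hw
              exact hw ▸ W''''.start_mem_support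

section TwoRegular

lemma pair_eq_of_ncard_two {s : Set V} (h : s.ncard = 2) {a b : V}
    (ha : a ∈ s) (hb : b ∈ s) (hab : a ≠ b) : s = {a, b} := by
  obtain ⟨x, y, hxy, rfl⟩ := Set.ncard_eq_two.mp h
  rcases ha with rfl | rfl <;> rcases hb with rfl | rfl
  · exact absurd rfl hab
  · rfl
  · exact Set.pair_comm _ _
  · exact absurd rfl hab

lemma exists_other (h2 : ∀ v, (X.neighborSet v).ncard = 2) (a b : V) :
    ∃ c, c ∈ X.neighborSet b ∧ c ≠ a := by
  obtain ⟨x, y, hxy, hs⟩ := Set.ncard_eq_two.mp (h2 b)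
  by_cases hx : x = a
  · subst hx
    exact ⟨y, by rw [hs]; exact Set.mem_insert_of_mem _ rfl, fun h => hxy h.symm⟩
  · exact ⟨x, by rw [hs]; exact Set.mem_insert _ _, hx⟩

noncomputable def nextV (h2 : ∀ v, (X.neighborSet v).ncard = 2) (a b : V) : V :=
  (exists_other h2 a b).choose

lemma nextV_mem (h2 : ∀ v, (X.neighborSet v).ncard = 2) (a b : V) :
    nextV h2 a b ∈ X.neighborSet b :=
  (exists_other h2 a b).choose_spec.1

lemma nextV_ne (h2 : ∀ v, (X.neighborSet v).ncard = 2) (a b : V) :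
    nextV h2 a b ≠ a :=
  (exists_other h2 a b).choose_spec.2

noncomputable def seqV (h2 : ∀ v, (X.neighborSet v).ncard = 2) (v0 v1 : V) : ℕ → V × V
  | 0 => (v0, v1)
  | (k+1) => ((seqV h2 v0 v1 k).2, nextV h2 (seqV h2 v0 v1 k).1 (seqV h2 v0 v1 k).2)

noncomputable def fV (h2 : ∀ v, (X.neighborSet v).ncard = 2) (v0 v1 : V) (k : ℕ) : V :=
  (seqV h2 v0 v1 k).1

variable {h2 : ∀ v, (X.neighborSet v).ncard = 2} {v0 v1 : V}

lemma fV_succ (k : ℕ) : fV h2 v0 v1 (k+1) = (seqV h2 v0 v1 k).2 := rfl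

lemma fV_two (k : ℕ) :
    fV h2 v0 v1 (k+2) = nextV h2 (fV h2 v0 v1 k) (fV h2 v0 v1 (k+1)) := rfl

lemma fV_adj (hadj : X.Adj v0 v1) (k : ℕ) :
    X.Adj (fV h2 v0 v1 k) (fV h2 v0 v1 (k+1)) := by
  cases k with
  | zero => exact hadj
  | succ k =>
    have := nextV_mem h2 (fV h2 v0 v1 k) (fV h2 v0 v1 (k+1))
    rw [SimpleGraph.mem_neighborSet] at this
    exact this

lemma fV_ne_two (k : ℕ) : fV h2 v0 v1 (k+2) ≠ fV h2 v0 v1 k :=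
  nextV_ne h2 _ _

lemma fV_nb (hadj : X.Adj v0 v1) (k : ℕ) :
    X.neighborSet (fV h2 v0 v1 (k+1)) = {fV h2 v0 v1 k, fV h2 v0 v1 (k+2)} := by
  refine pair_eq_of_ncard_two (h2 _) ?_ ?_ (fV_ne_two k).symm
  · exact (fV_adj hadj k).symm
  · exact fV_adj hadj (k+1)

lemma two_regular_cycle [Fintype V] (hconn : X.Connected) (h2 : ∀ v, (X.neighborSet v).ncard = 2) :
    3 ≤ Fintype.card V ∧ Nonempty (X ≃g SimpleGraph.cycleGraph (Fintype.card V)) := by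
  classical
  have hV : Nonempty V := hconn.nonempty
  set v0 : V := Classical.arbitrary V with hv0
  obtain ⟨v1, hv1, -⟩ := exists_other h2 v0 v0
  rw [SimpleGraph.mem_neighborSet] at hv1
  set f : ℕ → V := fV h2 v0 v1 with hf
  have hadj : ∀ k, X.Adj (f k) (f (k+1)) := fV_adj hv1
  have hne2 : ∀ k, f (k+2) ≠ f k := fun k => fV_ne_two k
  have hnb : ∀ k, X.neighborSet (f (k+1)) = {f k, f (k+2)} := fV_nb hv1
  -- the period
  have hPex : ∃ k, ∃ j, j < k ∧ f j = f k := by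
    obtain ⟨a, b, hab, hfab⟩ := Finite.exists_ne_map_eq_of_infinite f
    rcases Nat.lt_or_ge a b with h | h
    · exact ⟨b, a, h, hfab⟩
    · exact ⟨a, b, Nat.lt_of_le_of_ne h (Ne.symm hab), hfab.symm⟩
  obtain ⟨m, ⟨j, hjm, hfj⟩, hmin⟩ :
      ∃ m, (∃ j, j < m ∧ f j = f m) ∧ ∀ k, k < m → ¬∃ j, j < k ∧ f j = f k :=
    ⟨Nat.find hPex, Nat.find_spec hPex, fun k hk => Nat.find_min hPex hk⟩
  have inj' : ∀ a b, a < m → b < m → f a = f b → a = b := by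
    intro a b ha hb hab
    rcases Nat.lt_trichotomy a b with h | h | h
    · exact absurd ⟨a, h, hab⟩ (hmin b hb)
    · exact h
    · exact absurd ⟨b, h, hab.symm⟩ (hmin a ha)
  -- j = 0
  have hj0 : j = 0 := by
    by_contra hj
    obtain ⟨j', rfl⟩ : ∃ j', j = j' + 1 := ⟨j - 1, by omega⟩
    have hmem : f (m-1) ∈ X.neighborSet (f (j'+1)) := by
      rw [hfj, SimpleGraph.mem_neighborSet]
      have := hadj (m-1)
      rw [show m - 1 + 1 = m by omega] at this
      exact this.symm
    rw [hnb j'] at hmem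
    rcases hmem with hmem | hmem
    · have : m - 1 = j' := inj' _ _ (by omega) (by omega) hmem
      omega
    · rcases Nat.lt_or_ge (j'+2) m with h | h
      · have h12 : m - 1 = j' + 2 := inj' _ _ (by omega) h hmem
        refine hne2 (j'+1) ?_
        rw [show j'+1+2 = m by omega]
        exact hfj.symm
      · have h2m : j' + 2 = m := by omega
        rw [h2m] at hmem
        have hne := (hadj (m-1)).ne
        rw [show m-1+1 = m by omega] at hne
        exact hne hmem
  subst hj0
  have hfm : f m = f 0 := hfj.symm
  have hm3 : 3 ≤ m := by
    rcases (by omega : m = 1 ∨ m = 2 ∨ 3 ≤ m) with hm1 | hm2 | h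
    · rw [hm1] at hfm
      exact absurd hfm (hadj 0).ne'
    · rw [hm2] at hfm
      exact absurd hfm (hne2 0)
    · exact h
  have hnb0 : X.neighborSet (f 0) = {f 1, f (m-1)} := by
    refine pair_eq_of_ncard_two (h2 _) (hadj 0) ?_ ?_
    · rw [SimpleGraph.mem_neighborSet, ← hfm]
      have := hadj (m-1)
      rw [show m - 1 + 1 = m by omega] at this
      exact this.symm
    · intro h
      have : (1 : ℕ) = m - 1 := inj' _ _ (by omega) (by omega) h
      omega
  -- closure: every vertex is some f k with k < m
  have hclosed : ∀ u w, X.Adj u w → (∃ k, k < m ∧ f k = u) → (∃ k, k < m ∧ f k = w) := by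
    rintro u w hadjuw ⟨k, hk, rfl⟩
    have hw : w ∈ X.neighborSet (f k) := hadjuw
    cases k with
    | zero =>
      rw [hnb0] at hw
      rcases hw with rfl | rfl
      · exact ⟨1, by omega, rfl⟩
      · exact ⟨m-1, by omega, rfl⟩
    | succ k' =>
      rw [hnb k'] at hw
      rcases hw with rfl | rfl
      · exact ⟨k', by omega, rfl⟩
      · rcases Nat.lt_or_ge (k'+2) m with h | h
        · exact ⟨k'+2, h, rfl⟩
        · have hk2 : k' + 2 = m := by omega
          exact ⟨0, by omega, by rw [← hfm, hk2]⟩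
  have aux : ∀ (u w : V) (p : X.Walk u w), (∃ k, k < m ∧ f k = u) → (∃ k, k < m ∧ f k = w) := by
    intro u w p
    induction p with
    | nil => exact id
    | cons h p ih => exact fun hu => ih (hclosed _ _ h hu)
  have hsurj : ∀ w, ∃ k, k < m ∧ f k = w := by
    intro w
    obtain ⟨p⟩ := hconn (f 0) w
    exact aux _ _ p ⟨0, by omega, rfl⟩
  -- cardinality
  have hcard : Fintype.card V = m := by
    have hT : ((Finset.range m).image f) = Finset.univ := by
      refine Finset.eq_univ_iff_forall.mpr (fun w => ?_)
      obtain ⟨k, hk, hfk⟩ := hsurj w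
      exact Finset.mem_image.mpr ⟨k, Finset.mem_range.mpr hk, hfk⟩
    have hTcard : ((Finset.range m).image f).card = m := by
      rw [Finset.card_image_of_injOn
        (fun a ha b hb hab => inj' a b (Finset.mem_range.mp ha) (Finset.mem_range.mp hb) hab),
        Finset.card_range]
    rw [← Finset.card_univ, ← hT, hTcard]
  -- adjacency characterization
  have key : ∀ a b : ℕ, a < m → b < m →
      (X.Adj (f a) (f b) ↔ (b = (a+1) % m ∨ a = (b+1) % m)) := by
    have fwd : ∀ a b : ℕ, a < m → b < m → X.Adj (f a) (f b) →
        b = (a+1) % m ∨ a = (b+1) % m := by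
      intro a b ha hb hab
      have hw : f b ∈ X.neighborSet (f a) := hab
      cases a with
      | zero =>
        rw [hnb0] at hw
        rcases hw with hw | hw
        · left
          rw [inj' b 1 hb (by omega) hw, Nat.mod_eq_of_lt (by omega : 0+1 < m)]
        · right
          rw [inj' b (m-1) hb (by omega) hw, show m-1+1 = m by omega, Nat.mod_self]
      | succ a' =>
        rw [hnb a'] at hw
        rcases hw with hw | hw
        · right
          rw [inj' b a' hb (by omega) hw, Nat.mod_eq_of_lt (by omega : a'+1 < m)]
        · rcases Nat.lt_or_ge (a'+2) m with h | h
          · left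
            rw [inj' b (a'+2) hb h hw, Nat.mod_eq_of_lt (by omega : a'+1+1 < m)]
          · have hk2 : a' + 2 = m := by omega
            left
            rw [hk2, hfm] at hw
            rw [inj' b 0 hb (by omega) hw, show a'+1+1 = m by omega, Nat.mod_self]
    intro a b ha hb
    refine ⟨fwd a b ha hb, ?_⟩
    rintro (hc | hc)
    · rcases Nat.lt_or_ge (a+1) m with h | h
      · rw [hc, Nat.mod_eq_of_lt h]
        exact hadj a
      · have ham : a + 1 = m := by omega
        rw [hc, ham, Nat.mod_self]
        have := hadj a
        rw [ham, hfm] at this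
        exact this
    · rcases Nat.lt_or_ge (b+1) m with h | h
      · rw [hc, Nat.mod_eq_of_lt h]
        exact (hadj b).symm
      · have hbm : b + 1 = m := by omega
        rw [hc, hbm, Nat.mod_self]
        have := hadj b
        rw [hbm, hfm] at this
        exact this.symm
  obtain ⟨m', rfl⟩ : ∃ m', m = m' + 3 := ⟨m - 3, by omega⟩
  refine ⟨by omega, ?_⟩
  rw [hcard]
  have ebij : Function.Bijective (fun a : Fin (m'+3) => f a.val) := by
    constructor
    · intro a b hab
      exact Fin.ext (inj' a.val b.val a.isLt b.isLt hab)
    · intro w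
      obtain ⟨k, hk, hfk⟩ := hsurj w
      exact ⟨⟨k, hk⟩, hfk⟩
  set e : Fin (m'+3) ≃ V := Equiv.ofBijective _ ebij with he
  have hiso : ∀ a b : Fin (m'+3),
      X.Adj (e a) (e b) ↔ (SimpleGraph.cycleGraph (m'+3)).Adj a b := by
    intro a b
    have h1 : e a = f a.val := rfl
    have h2 : e b = f b.val := rfl
    rw [h1, h2, key a.val b.val a.isLt b.isLt, SimpleGraph.cycleGraph_adj]
    have hx : ∀ u v : Fin (m'+3), (v - u = 1) ↔ (v.val = (u.val + 1) % (m'+3)) := by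
      intro u v
      rw [sub_eq_iff_eq_add, Fin.ext_iff, Fin.add_def, Fin.val_one]
      constructor
      · intro h; rw [h]; ring_nf
      · intro h; rw [h]; ring_nf
    rw [← hx a b, ← hx b a]
    tauto
  exact ⟨(RelIso.symm ⟨e, fun {a b} => hiso a b⟩ : X ≃g SimpleGraph.cycleGraph (m'+3))⟩

end TwoRegular

lemma adj_inl_q {v : V} {q : QT X} :
    (subdivide4 X).Adj (inl v) (inr (inl q)) ↔ q.1.1 = v := by
  erw [adj_inl]
  constructor
  · rintro ⟨q', h, hw⟩
    obtain rfl : q = q' := Sum.inl_injective (Sum.inr_injective hw)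
    exact h
  · exact fun h => ⟨q, h, rfl⟩

lemma adj_q_r {e : X.edgeSet} {q : QT X} :
    (subdivide4 X).Adj (inr (inl q)) (inr (inr e)) ↔ q.1.2 = e := by
  erw [adj_q]
  constructor
  · rintro (h | h)
    · exact absurd h (fun h => nomatch h)
    · exact (Sum.inr_injective (Sum.inr_injective h)).symm
  · rintro rfl
    exact Or.inr rfl

lemma dist_mod_inl (hconn : X.Connected) (i j : V) :
    (subdivide4 X).dist (inl i) (inl j) % 4 = 0 := by
  obtain ⟨p, hp, hlen⟩ := (subdivide4_connected hconn).exists_path_of_dist (inl i) (inl j)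
  have := (path_class p.length i (inl j) p hp rfl).1 ⟨j, rfl⟩
  rwa [hlen] at this

lemma dist_mod_q (hconn : X.Connected) (i : V) (q : QT X) :
    (subdivide4 X).dist (inl i) (inr (inl q)) % 2 = 1 := by
  obtain ⟨p, hp, hlen⟩ := (subdivide4_connected hconn).exists_path_of_dist (inl i) (inr (inl q))
  have := (path_class p.length i _ p hp rfl).2.1 ⟨q, rfl⟩
  rwa [hlen] at this

lemma dist_mod_r (hconn : X.Connected) (i : V) (e : X.edgeSet) :
    (subdivide4 X).dist (inl i) (inr (inr e)) % 4 = 2 := by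
  obtain ⟨p, hp, hlen⟩ := (subdivide4_connected hconn).exists_path_of_dist (inl i) (inr (inr e))
  have := (path_class p.length i _ p hp rfl).2.2 ⟨e, rfl⟩
  rwa [hlen] at this

lemma inl_of_dist_mod (hconn : X.Connected) (i : V) (v : SubdivVert X)
    (h : (subdivide4 X).dist (inl i) v % 4 = 0) : ∃ j, v = inl j := by
  rcases v with j | q | e
  · exact ⟨j, rfl⟩
  · have := dist_mod_q hconn i q
    omega
  · have := dist_mod_r hconn i e
    omega

lemma dist_map {W : Type*} {G : SimpleGraph W} (hpre : G.Preconnected) (Ψ : G ≃g G) (u v : W) :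
    G.dist (Ψ u) (Ψ v) = G.dist u v := by
  have le : ∀ (Φ : G ≃g G) (u v : W), G.dist (Φ u) (Φ v) ≤ G.dist u v := by
    intro Φ u v
    obtain ⟨p, hp⟩ := (hpre u v).exists_walk_length_eq_dist
    calc G.dist (Φ u) (Φ v) ≤ (p.map Φ.toHom).length := SimpleGraph.dist_le _
    _ = p.length := p.length_map _
    _ = G.dist u v := hp
  refine le_antisymm (le Ψ u v) ?_
  have h2 := le Ψ.symm (Ψ u) (Ψ v)
  rwa [Ψ.symm_apply_apply, Ψ.symm_apply_apply] at h2

lemma eq_sym2_of_two_mem {z : Sym2 V} {a b : V} (hne : a ≠ b) (ha : a ∈ z) (hb : b ∈ z) :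
    z = s(a, b) := by
  induction z using Sym2.ind with
  | _ x y =>
    rcases Sym2.mem_iff.mp ha with rfl | rfl <;> rcases Sym2.mem_iff.mp hb with rfl | rfl
    · exact absurd rfl hne
    · rfl
    · exact Sym2.eq_swap
    · exact absurd rfl hne

/-- The action of an automorphism of `X` on edges. -/
def eMap (φ : X ≃g X) : X.edgeSet ≃ X.edgeSet where
  toFun e := ⟨Sym2.map φ e.1, φ.toHom.map_mem_edgeSet e.2⟩
  invFun e := ⟨Sym2.map φ.symm e.1, φ.symm.toHom.map_mem_edgeSet e.2⟩
  left_inv e := by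
    rcases e with ⟨z, hz⟩
    refine Subtype.ext ?_
    induction z using Sym2.ind with
    | _ x y => simp
  right_inv e := by
    rcases e with ⟨z, hz⟩
    refine Subtype.ext ?_
    induction z using Sym2.ind with
    | _ x y => simp

lemma eMap_coe (φ : X ≃g X) (e : X.edgeSet) :
    ((eMap φ e : X.edgeSet) : Sym2 V) = Sym2.map φ e.1 := rfl

/-- The action of an automorphism of `X` on incidence vertices. -/
def qMap (φ : X ≃g X) : QT X ≃ QT X :=
  Equiv.subtypeEquiv (Equiv.prodCongr φ.toEquiv (eMap φ)) (by
    rintro ⟨v, e⟩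
    simp only [Equiv.prodCongr_apply, Prod.map]
    rw [eMap_coe]
    constructor
    · intro h
      exact Sym2.mem_map.mpr ⟨v, h, rfl⟩
    · intro h
      obtain ⟨a, ha, haeq⟩ := Sym2.mem_map.mp h
      rwa [← φ.injective haeq])

lemma qMap_fst (φ : X ≃g X) (q : QT X) : (qMap φ q).1.1 = φ q.1.1 := rfl
lemma qMap_snd (φ : X ≃g X) (q : QT X) : (qMap φ q).1.2 = eMap φ q.1.2 := rfl

/-- The action of an automorphism of `X` on the vertices of the subdivision. -/
def sMap (φ : X ≃g X) : SubdivVert X ≃ SubdivVert X :=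
  Equiv.sumCongr φ.toEquiv (Equiv.sumCongr (qMap φ) (eMap φ))

/-- The induced automorphism of the subdivision. -/
def FIso (φ : X ≃g X) : subdivide4 X ≃g subdivide4 X := by
  refine ⟨sMap φ, @fun a b => ?_⟩
  rcases a with v | q | e <;> rcases b with w | q' | e'
  · constructor
    · intro h
      obtain ⟨_, _, hw⟩ := adj_inl.mp h
      exact absurd hw.symm (fun h => nomatch h)
    · intro h
      obtain ⟨_, _, hw⟩ := adj_inl.mp h
      exact absurd hw.symm (fun h => nomatch h)
  · show (subdivide4 X).Adj (inl (φ v)) (inr (inl (qMap φ q'))) ↔ _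
    rw [adj_inl_q, adj_inl_q, qMap_fst]
    exact ⟨fun h => φ.injective h, fun h => congrArg φ h⟩
  · show (subdivide4 X).Adj (inl (φ v)) (inr (inr (eMap φ e'))) ↔ _
    constructor
    · intro h
      obtain ⟨_, _, hw⟩ := adj_inl.mp h
      exact absurd hw.symm (fun h => nomatch (Sum.inr_injective h))
    · intro h
      obtain ⟨_, _, hw⟩ := adj_inl.mp h
      exact absurd hw.symm (fun h => nomatch (Sum.inr_injective h))
  · show (subdivide4 X).Adj (inr (inl (qMap φ q))) (inl (φ w)) ↔ _
    erw [(subdivide4 X).adj_comm, (subdivide4 X).adj_comm (inr (inl q)) (inl w),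
      adj_inl_q, adj_inl_q, qMap_fst]
    exact ⟨fun h => φ.injective h, fun h => congrArg φ h⟩
  · show (subdivide4 X).Adj (inr (inl (qMap φ q))) (inr (inl (qMap φ q'))) ↔ _
    constructor
    · intro h
      rcases adj_q.mp h with h | h
      · exact absurd h (fun h => nomatch h)
      · exact absurd h (fun h => nomatch (Sum.inr_injective h))
    · intro h
      rcases adj_q.mp h with h | h
      · exact absurd h (fun h => nomatch h)
      · exact absurd h (fun h => nomatch (Sum.inr_injective h))
  · show (subdivide4 X).Adj (inr (inl (qMap φ q))) (inr (inr (eMap φ e'))) ↔ _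
    rw [adj_q_r, adj_q_r, qMap_snd]
    exact ⟨fun h => (eMap φ).injective h, fun h => congrArg (eMap φ) h⟩
  · show (subdivide4 X).Adj (inr (inr (eMap φ e))) (inl (φ w)) ↔ _
    constructor
    · intro h
      obtain ⟨_, _, hw⟩ := adj_r.mp h
      exact absurd hw (fun h => nomatch h)
    · intro h
      obtain ⟨_, _, hw⟩ := adj_r.mp h
      exact absurd hw (fun h => nomatch h)
  · show (subdivide4 X).Adj (inr (inr (eMap φ e))) (inr (inl (qMap φ q'))) ↔ _
    erw [(subdivide4 X).adj_comm, (subdivide4 X).adj_comm (inr (inr e)) (inr (inl q')),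
      adj_q_r, adj_q_r, qMap_snd]
    exact ⟨fun h => (eMap φ).injective h, fun h => congrArg (eMap φ) h⟩
  · show (subdivide4 X).Adj (inr (inr (eMap φ e))) (inr (inr (eMap φ e'))) ↔ _
    constructor
    · intro h
      obtain ⟨_, _, hw⟩ := adj_r.mp h
      exact absurd hw (fun h => nomatch (Sum.inr_injective h))
    · intro h
      obtain ⟨_, _, hw⟩ := adj_r.mp h
      exact absurd hw (fun h => nomatch (Sum.inr_injective h))

lemma FIso_inl (φ : X ≃g X) (v : V) : FIso φ (inl v) = inl (φ v) := rfl
lemma FIso_q (φ : X ≃g X) (q : QT X) : FIso φ (inr (inl q)) = inr (inl (qMap φ q)) := rfl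
lemma FIso_r (φ : X ≃g X) (e : X.edgeSet) : FIso φ (inr (inr e)) = inr (inr (eMap φ e)) := rfl

/-- The monoid homomorphism from automorphisms of `X` to automorphisms of the subdivision. -/
def Fhom : (X ≃g X) →* (subdivide4 X ≃g subdivide4 X) where
  toFun := FIso
  map_one' := by
    refine RelIso.ext (fun x => ?_)
    rcases x with v | q | e
    · rfl
    · show inr (inl (qMap 1 q)) = inr (inl q)
      refine congrArg _ (congrArg _ (qt_ext rfl (Subtype.ext ?_)))
      show Sym2.map _ q.1.2.1 = q.1.2.1
      have : ⇑(1 : X ≃g X) = id := rfl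
      rw [this, Sym2.map_id, id_eq]
    · show inr (inr (eMap 1 e)) = inr (inr e)
      refine congrArg _ (congrArg _ (Subtype.ext ?_))
      show Sym2.map _ e.1 = e.1
      have : ⇑(1 : X ≃g X) = id := rfl
      rw [this, Sym2.map_id, id_eq]
  map_mul' φ ψ := by
    refine RelIso.ext (fun x => ?_)
    rcases x with v | q | e
    · rfl
    · show inr (inl (qMap (φ * ψ) q)) = inr (inl (qMap φ (qMap ψ q)))
      refine congrArg _ (congrArg _ (qt_ext rfl (Subtype.ext ?_)))
      show Sym2.map ⇑(φ * ψ) q.1.2.1 = Sym2.map ⇑φ (Sym2.map ⇑ψ q.1.2.1)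
      rw [Sym2.map_map]
      rfl
    · show inr (inr (eMap (φ * ψ) e)) = inr (inr (eMap φ (eMap ψ e)))
      refine congrArg _ (congrArg _ (Subtype.ext ?_))
      show Sym2.map ⇑(φ * ψ) e.1 = Sym2.map ⇑φ (Sym2.map ⇑ψ e.1)
      rw [Sym2.map_map]
      rfl

lemma Fhom_injective : Function.Injective (Fhom (X := X)) := by
  intro φ ψ h
  refine RelIso.ext (fun v => ?_)
  have h2 : (inl (φ v) : SubdivVert X) = inl (ψ v) :=
    congrArg (fun (Θ : subdivide4 X ≃g subdivide4 X) => Θ (inl v)) h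
  exact Sum.inl_injective h2

end Subdiv4

open Subdiv4 Sum SimpleGraph in
theorem aut_subdivide4 {V : Type*} [Fintype V] (X : SimpleGraph V)
    (hconn : X.Connected)
    (hcycle : ∀ n : ℕ, 3 ≤ n → IsEmpty (X ≃g SimpleGraph.cycleGraph n))
    (hcard : Fintype.card V ≠ 1) :
    Nonempty ((subdivide4 X ≃g subdivide4 X) ≃* (X ≃g X)) := by
  classical
  have hCconn := subdivide4_connected hconn
  obtain ⟨s₀, hs₀⟩ : ∃ s : V, (X.neighborSet s).ncard ≠ 2 := by
    by_contra hcon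
    push_neg at hcon
    obtain ⟨h3, ⟨iso⟩⟩ := two_regular_cycle hconn hcon
    exact (hcycle _ h3).false iso
  -- automorphisms preserve the original vertices
  have key1 : ∀ (Ψ : subdivide4 X ≃g subdivide4 X) (v : V), ∃ w, Ψ (inl v) = inl w := by
    intro Ψ v
    have h1 : ((subdivide4 X).neighborSet (Ψ (inl s₀))).ncard ≠ 2 := by
      rw [ncard_nbhd_map Ψ (inl s₀), ncard_nbhd_inl]
      exact hs₀
    obtain ⟨t, ht⟩ : ∃ t, Ψ (inl s₀) = inl t := by
      rcases hx : Ψ (inl s₀) with t | q | e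
      · exact ⟨t, rfl⟩
      · rw [hx, ncard_nbhd_q] at h1
        exact absurd rfl h1
      · rw [hx, ncard_nbhd_r] at h1
        exact absurd rfl h1
    have hd : (subdivide4 X).dist (inl t) (Ψ (inl v)) % 4 = 0 := by
      erw [← ht, dist_map hCconn.preconnected Ψ]
      exact dist_mod_inl hconn s₀ v
    exact inl_of_dist_mod hconn t _ hd
  -- behaviour of automorphisms on incidence and edge vertices
  have keyHim : ∀ (Θ : subdivide4 X ≃g subdivide4 X) (θ : V → V),
      (∀ v, Θ (inl v) = inl (θ v)) → (∀ v, ∃ u, Θ.symm (inl v) = inl u) →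
      ∀ q : QT X, ∃ q₂ : QT X, Θ (inr (inl q)) = inr (inl q₂) ∧ q₂.1.1 = θ q.1.1 ∧
        Θ (inr (inr q.1.2)) = inr (inr q₂.1.2) := by
    intro Θ θ hθ hθs q
    have hadj1 : (subdivide4 X).Adj (inl q.1.1) (inr (inl q)) := adj_inl_q.mpr rfl
    have hadj2 := Θ.map_adj_iff.mpr hadj1
    rw [hθ] at hadj2
    obtain ⟨q₂, hq₂, hw⟩ := adj_inl.mp hadj2
    refine ⟨q₂, hw, hq₂, ?_⟩
    have hadj3 : (subdivide4 X).Adj (inr (inl q)) (inr (inr q.1.2)) := adj_q_r.mpr rfl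
    have hadj4 := Θ.map_adj_iff.mpr hadj3
    rw [hw] at hadj4
    rcases adj_q.mp hadj4 with h | h
    · exfalso
      obtain ⟨u, hu⟩ := hθs q₂.1.1
      have h2 : Θ.symm (Θ (inr (inr q.1.2))) = Θ.symm (inl q₂.1.1) := congrArg _ h
      erw [Θ.symm_apply_apply, hu] at h2
      exact nomatch h2
    · exact h
  -- adjacency is preserved by the induced vertex map
  have keyAdj : ∀ (Θ : subdivide4 X ≃g subdivide4 X) (θ : V → V),
      (∀ v, Θ (inl v) = inl (θ v)) → (∀ v, ∃ u, Θ.symm (inl v) = inl u) →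
      ∀ a b, X.Adj a b → X.Adj (θ a) (θ b) := by
    intro Θ θ hθ hθs a b hab
    obtain ⟨q₂, hw2, h12, hr2⟩ := keyHim Θ θ hθ hθs ⟨(a, ⟨s(a,b), hab⟩), Sym2.mem_mk_left _ _⟩
    obtain ⟨q₃, hw3, h13, hr3⟩ := keyHim Θ θ hθ hθs ⟨(b, ⟨s(a,b), hab⟩), Sym2.mem_mk_right _ _⟩
    have hee : q₂.1.2 = q₃.1.2 :=
      Sum.inr_injective (Sum.inr_injective (hr2.symm.trans hr3))
    have hne : θ a ≠ θ b := by
      intro h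
      have h2 : Θ (inl a) = Θ (inl b) := by rw [hθ a, hθ b, h]
      exact hab.ne (Sum.inl_injective (Θ.injective h2))
    have hmema : θ a ∈ (q₂.1.2 : Sym2 V) := h12 ▸ q₂.2
    have hmemb : θ b ∈ (q₂.1.2 : Sym2 V) := by
      rw [hee]
      exact h13 ▸ q₃.2
    have hz : (q₂.1.2 : Sym2 V) = s(θ a, θ b) := eq_sym2_of_two_mem hne hmema hmemb
    have hzz := q₂.1.2.2
    rw [hz] at hzz
    exact hzz
  -- injectivity of Fhom
  have Finj : Function.Injective (Fhom (X := X)) := Fhom_injective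
  -- surjectivity of Fhom
  have Fsurj : Function.Surjective (Fhom (X := X)) := by
    intro Ψ
    set φf : V → V := fun v => (key1 Ψ v).choose with hφfdef
    have hφf : ∀ v, Ψ (inl v) = inl (φf v) := fun v => (key1 Ψ v).choose_spec
    set φg : V → V := fun v => (key1 Ψ.symm v).choose with hφgdef
    have hφg : ∀ v, Ψ.symm (inl v) = inl (φg v) := fun v => (key1 Ψ.symm v).choose_spec
    have hgf : ∀ v, φg (φf v) = v := by
      intro v
      have h2 : Ψ.symm (Ψ (inl v)) = inl (φg (φf v)) := by rw [hφf v, hφg]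
      erw [Ψ.symm_apply_apply] at h2
      exact (Sum.inl_injective h2).symm
    have hfg : ∀ v, φf (φg v) = v := by
      intro v
      have h2 : Ψ (Ψ.symm (inl v)) = inl (φf (φg v)) := by rw [hφg v, hφf]
      erw [Ψ.apply_symm_apply] at h2
      exact (Sum.inl_injective h2).symm
    have hsymθ : ∀ v, ∃ u, Ψ.symm (inl v) = inl u := fun v => ⟨φg v, hφg v⟩
    have hsymθ' : ∀ v, ∃ u, Ψ.symm.symm (inl v) = inl u := by
      intro v
      exact ⟨φf v, hφf v⟩
    have hadjf := keyAdj Ψ φf hφf hsymθ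
    have hadjg := keyAdj Ψ.symm φg hφg hsymθ'
    set φEquiv : V ≃ V := ⟨φf, φg, hgf, hfg⟩ with hφEquiv
    have hmapiff : ∀ a b, X.Adj (φEquiv a) (φEquiv b) ↔ X.Adj a b := by
      intro a b
      refine ⟨fun h => ?_, hadjf a b⟩
      have h2 := hadjg _ _ h
      rwa [show φEquiv a = φf a from rfl, show φEquiv b = φf b from rfl, hgf, hgf] at h2
    set φIso : X ≃g X := ⟨φEquiv, @fun a b => hmapiff a b⟩ with hφIso
    -- images of edge vertices
    have hE : ∀ e : X.edgeSet, Ψ (inr (inr e)) = inr (inr (eMap φIso e)) := by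
      rintro ⟨z, hz⟩
      induction z using Sym2.ind with
      | _ a b =>
      have hab : X.Adj a b := (X.mem_edgeSet).mp hz
      obtain ⟨q₂, hw2, h12, hr2⟩ := keyHim Ψ φf hφf hsymθ ⟨(a, ⟨s(a,b), hz⟩), Sym2.mem_mk_left _ _⟩
      obtain ⟨q₃, hw3, h13, hr3⟩ := keyHim Ψ φf hφf hsymθ ⟨(b, ⟨s(a,b), hz⟩), Sym2.mem_mk_right _ _⟩
      rw [show ((⟨s(a,b), hz⟩ : X.edgeSet) : X.edgeSet) = (⟨(a, ⟨s(a,b), hz⟩), Sym2.mem_mk_left a b⟩ : QT X).1.2 from rfl, hr2]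
      refine congrArg _ (congrArg _ (Subtype.ext ?_))
      have hee : q₂.1.2 = q₃.1.2 :=
        Sum.inr_injective (Sum.inr_injective (hr2.symm.trans hr3))
      have hne : φf a ≠ φf b := by
        intro h
        have h2 : Ψ (inl a) = Ψ (inl b) := by rw [hφf a, hφf b, h]
        exact hab.ne (Sum.inl_injective (Ψ.injective h2))
      have hmema : φf a ∈ (q₂.1.2 : Sym2 V) := h12 ▸ q₂.2
      have hmemb : φf b ∈ (q₂.1.2 : Sym2 V) := by
        rw [hee]
        exact h13 ▸ q₃.2
      show (q₂.1.2 : Sym2 V) = Sym2.map φIso s(a, b)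
      rw [Sym2.map_pair_eq]
      exact eq_sym2_of_two_mem hne hmema hmemb
    refine ⟨φIso, ?_⟩
    refine RelIso.ext (fun x => ?_)
    rcases x with v | q | e
    · rw [show (Fhom φIso) (inl v) = inl (φIso v) from rfl, hφf v]
      rfl
    · obtain ⟨q₂, hw2, h12, hr2⟩ := keyHim Ψ φf hφf hsymθ q
      rw [show (Fhom φIso) (inr (inl q)) = inr (inl (qMap φIso q)) from rfl, hw2]
      refine congrArg _ (congrArg _ ?_)
      refine (qt_ext ?_ ?_).symm
      · exact h12
      · have h3 := hE q.1.2
        rw [hr2] at h3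
        have h4 : q₂.1.2 = eMap φIso q.1.2 := Sum.inr_injective (Sum.inr_injective h3)
        exact h4
    · rw [show (Fhom φIso) (inr (inr e)) = inr (inr (eMap φIso e)) from rfl]
      exact (hE e).symm
  exact ⟨(MulEquiv.ofBijective (Fhom (X := X)) ⟨Finj, Fsurj⟩).symm⟩
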